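/- In the Lagrangian maximization of the combined case-control profile likelihood, the Lagrange multiplier vanishes: if p_{ik} > 0 satisfy the first-order condition 1/p_{ik} = Σ_{t=1}^K [n_{t1}/c̃_t · φ_t(x_{ik}) + n_{t0}/(1-c̃_t) · (1-φ_t(x_{ik}))] + λ for all i,k, together with Σ_{i,k} p_{ik} = 1 and c̃_t = Σ_{i,k} φ_t(x_{ik}) p_{ik}, then λ = 0. -/

import Mathlib

open Finset

/-- In the Lagrangian maximization of the combined case-control profile
likelihood, the Lagrange multiplier vanishes. -/
theorem lagrange_multiplier_zero (K : ℕ) (n n1 n0 : Fin K → ℕ)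
    (hn : ∀ k, n k = n1 k + n0 k)
    (φf : Fin K → (k : Fin K) → Fin (n k) → ℝ)
    (hφ : ∀ t k i, 0 < φf t k i ∧ φf t k i < 1)
    (p : (k : Fin K) → Fin (n k) → ℝ) (hp : ∀ k i, 0 < p k i)
    (hpsum : ∑ k, ∑ i, p k i = 1)
    (ct : Fin K → ℝ)
    (hct : ∀ t, ct t = ∑ k, ∑ i, φf t k i * p k i)
    (hct01 : ∀ t, 0 < ct t ∧ ct t < 1)
    (lam : ℝ)
    (hfoc : ∀ k i, 1 / p k i =
      (∑ t, ((n1 t : ℝ) / ct t * φf t k i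
        + (n0 t : ℝ) / (1 - ct t) * (1 - φf t k i))) + lam) :
    lam = 0 := by
  -- multiply the FOC by p k i
  have h1 : ∀ k i, (1 : ℝ) = p k i *
      ((∑ t, ((n1 t : ℝ) / ct t * φf t k i
        + (n0 t : ℝ) / (1 - ct t) * (1 - φf t k i))) + lam) := by
    intro k i
    have hne := (hp k i).ne'
    have h := (div_eq_iff hne).mp (hfoc k i)
    exact h.trans (mul_comm _ _)
  have hsum : ∑ k, ∑ _i : Fin (n k), (1 : ℝ) = ∑ k, ∑ i, p k i *
      ((∑ t, ((n1 t : ℝ) / ct t * φf t k i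
        + (n0 t : ℝ) / (1 - ct t) * (1 - φf t k i))) + lam) := by
    exact Finset.sum_congr rfl fun k _ => Finset.sum_congr rfl fun i _ => h1 k i
  -- LHS = N
  have hL : ∑ k, ∑ _i : Fin (n k), (1 : ℝ) = ∑ k, ((n1 k : ℝ) + (n0 k : ℝ)) := by
    refine Finset.sum_congr rfl fun k _ => ?_
    simp [hn k]
  -- expand RHS
  have hR : ∑ k, ∑ i, p k i *
      ((∑ t, ((n1 t : ℝ) / ct t * φf t k i
        + (n0 t : ℝ) / (1 - ct t) * (1 - φf t k i))) + lam)
      = (∑ t, ((n1 t : ℝ) + (n0 t : ℝ))) + lam := by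
    have e1 : ∀ k i, p k i *
        ((∑ t, ((n1 t : ℝ) / ct t * φf t k i
          + (n0 t : ℝ) / (1 - ct t) * (1 - φf t k i))) + lam)
        = (∑ t, ((n1 t : ℝ) / ct t * (φf t k i * p k i)
          + (n0 t : ℝ) / (1 - ct t) * (p k i - φf t k i * p k i))) + lam * p k i := by
      intro k i
      rw [mul_add, Finset.mul_sum]
      ring_nf
    calc ∑ k, ∑ i, p k i *
        ((∑ t, ((n1 t : ℝ) / ct t * φf t k i
          + (n0 t : ℝ) / (1 - ct t) * (1 - φf t k i))) + lam)
        = ∑ k, ∑ i, ((∑ t, ((n1 t : ℝ) / ct t * (φf t k i * p k i)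
          + (n0 t : ℝ) / (1 - ct t) * (p k i - φf t k i * p k i))) + lam * p k i) := by
          exact Finset.sum_congr rfl fun k _ => Finset.sum_congr rfl fun i _ => e1 k i
      _ = (∑ k, ∑ i, ∑ t, ((n1 t : ℝ) / ct t * (φf t k i * p k i)
          + (n0 t : ℝ) / (1 - ct t) * (p k i - φf t k i * p k i)))
          + lam * (∑ k, ∑ i, p k i) := by
          rw [Finset.mul_sum]
          rw [← Finset.sum_add_distrib]
          refine Finset.sum_congr rfl fun k _ => ?_
          rw [Finset.mul_sum, ← Finset.sum_add_distrib]
      _ = (∑ t, ∑ k, ∑ i, ((n1 t : ℝ) / ct t * (φf t k i * p k i)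
          + (n0 t : ℝ) / (1 - ct t) * (p k i - φf t k i * p k i))) + lam := by
          rw [hpsum, mul_one]
          congr 1
          rw [Finset.sum_comm]
          refine Finset.sum_congr rfl fun k _ => ?_
          rw [Finset.sum_comm]
      _ = (∑ t, ((n1 t : ℝ) + (n0 t : ℝ))) + lam := by
          congr 1
          refine Finset.sum_congr rfl fun t _ => ?_
          have hsplit : ∑ k, ∑ i, ((n1 t : ℝ) / ct t * (φf t k i * p k i)
              + (n0 t : ℝ) / (1 - ct t) * (p k i - φf t k i * p k i))
              = (n1 t : ℝ) / ct t * (∑ k, ∑ i, φf t k i * p k i)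
              + (n0 t : ℝ) / (1 - ct t) * ((∑ k, ∑ i, p k i) - ∑ k, ∑ i, φf t k i * p k i) := by
            rw [Finset.mul_sum, ← Finset.sum_sub_distrib, Finset.mul_sum,
              ← Finset.sum_add_distrib]
            refine Finset.sum_congr rfl fun k _ => ?_
            rw [Finset.mul_sum, ← Finset.sum_sub_distrib, Finset.mul_sum,
              ← Finset.sum_add_distrib]
          rw [hsplit, ← hct t, hpsum]
          have h1 := (hct01 t).1.ne'
          have h2 : (1 : ℝ) - ct t ≠ 0 := by
            have := (hct01 t).2; linarith
          field_simp
  rw [hL, hR] at hsum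
  linarith
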